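/- (Extension property for cofibrations of retractive simplicial sets.) Let X be a simplicial set. Suppose given retractive simplicial sets A, B, A', B' over X, maps A ⟶ B and A' ⟶ B' over and under X whose underlying maps are monomorphisms, and maps f_A : A ⟶ A' and f_B : B ⟶ B' over and under X with f_B restricting to f_A. Let C := B ⨿_A X be the pushout of A ⟶ B along the retraction A ⟶ X, and similarly C' := B' ⨿_{A'} X, and let f_C : C ⟶ C' be the induced map. If the underlying maps of f_A and f_C are monomorphisms, then the underlying map of f_B is a monomorphism. -/

import Mathlib

open CategoryTheory CategoryTheory.Limits Simplicial

universe u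

/-- A retractive simplicial set over `X`. -/
structure Retr (X : SSet.{u}) where
  Y : SSet.{u}
  r : Y ⟶ X
  s : X ⟶ Y
  retr : s ≫ r = 𝟙 X

namespace Retr

variable {X X₁ X₂ : SSet.{u}}

/-- The "wedge" `Y₁ ⨯ X₂ ∪_(X₁ ⨯ X₂) X₁ ⨯ Y₂`. -/
noncomputable def wedgeObj (W₁ : Retr X₁) (W₂ : Retr X₂) : SSet.{u} :=
  pushout (prod.map W₁.s (𝟙 X₂)) (prod.map (𝟙 X₁) W₂.s)

/-- The canonical map from the wedge to the product. -/
noncomputable def wedgeToProd (W₁ : Retr X₁) (W₂ : Retr X₂) :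
    wedgeObj W₁ W₂ ⟶ W₁.Y ⨯ W₂.Y :=
  pushout.desc (prod.map (𝟙 W₁.Y) W₂.s) (prod.map W₁.s (𝟙 W₂.Y))
    (by simp [prod.map_map])

/-- The map from the wedge to the base, induced by the retractions. -/
noncomputable def wedgeToBase (W₁ : Retr X₁) (W₂ : Retr X₂) :
    wedgeObj W₁ W₂ ⟶ X₁ ⨯ X₂ :=
  pushout.desc (prod.map W₁.r (𝟙 X₂)) (prod.map (𝟙 X₁) W₂.r)
    (by simp [prod.map_map, W₁.retr, W₂.retr])

/-- The exterior smash product of retractive simplicial sets. -/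
noncomputable def esmash (W₁ : Retr X₁) (W₂ : Retr X₂) : Retr (X₁ ⨯ X₂) where
  Y := pushout (wedgeToBase W₁ W₂) (wedgeToProd W₁ W₂)
  s := pushout.inl _ _
  r := pushout.desc (𝟙 _) (prod.map W₁.r W₂.r) (by
    apply pushout.hom_ext <;>
      simp [wedgeObj, pushout.inl_desc, pushout.inr_desc, pushout.inl_desc_assoc, pushout.inr_desc_assoc, wedgeToBase, wedgeToProd, prod.map_map, W₁.retr, W₂.retr])
  retr := pushout.inl_desc _ _ _

/-- The canonical quotient map `Y₁ ⨯ Y₂ ⟶ Y₁ ⊼ Y₂`. -/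
noncomputable def esmashQuot (W₁ : Retr X₁) (W₂ : Retr X₂) :
    (W₁.Y ⨯ W₂.Y) ⟶ (esmash W₁ W₂).Y :=
  pushout.inr _ _

/-- Pushforward of a retractive simplicial set along a map of base simplicial sets. -/
noncomputable def pushf {X X' : SSet.{u}} (f : X ⟶ X') (W : Retr X) : Retr X' where
  Y := pushout W.s f
  s := pushout.inr _ _
  r := pushout.desc (W.r ≫ f) (𝟙 X') (by
    rw [← Category.assoc, W.retr, Category.id_comp, Category.comp_id])
  retr := by simp [pushout.inr_desc]

/-- The internal smash product over a base with multiplication `μ`. -/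
noncomputable def ismash (μ : X ⨯ X ⟶ X) (W₁ W₂ : Retr X) : Retr X :=
  pushf μ (esmash W₁ W₂)

/-- The canonical quotient map `Y₁ ⨯ Y₂ ⟶ Y₁ ∧ Y₂`. -/
noncomputable def ismashQuot (μ : X ⨯ X ⟶ X) (W₁ W₂ : Retr X) :
    (W₁.Y ⨯ W₂.Y) ⟶ (ismash μ W₁ W₂).Y :=
  esmashQuot W₁ W₂ ≫ pushout.inl (esmash W₁ W₂).s μ

/-- Morphisms of retractive simplicial sets over a fixed base. -/
structure RHom {X : SSet.{u}} (W W' : Retr X) where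
  f : W.Y ⟶ W'.Y
  hs : W.s ≫ f = W'.s
  hr : f ≫ W'.r = W.r

/-- The identity morphism of a retractive simplicial set. -/
def RHom.id (W : Retr X) : RHom W W := ⟨𝟙 _, by simp, by simp⟩

/-- The map induced on wedges by a pair of morphisms of retractive simplicial sets. -/
noncomputable def wedgeMap {W₁ W₁' : Retr X₁} {W₂ W₂' : Retr X₂}
    (φ₁ : RHom W₁ W₁') (φ₂ : RHom W₂ W₂') : wedgeObj W₁ W₂ ⟶ wedgeObj W₁' W₂' :=
  pushout.map _ _ _ _ (prod.map φ₁.f (𝟙 X₂)) (prod.map (𝟙 X₁) φ₂.f) (𝟙 (X₁ ⨯ X₂))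
    (by simp [prod.map_map, φ₁.hs]) (by simp [prod.map_map, φ₂.hs])

/-- The map induced on exterior smash products by a pair of morphisms
of retractive simplicial sets. -/
noncomputable def esmashMap {W₁ W₁' : Retr X₁} {W₂ W₂' : Retr X₂}
    (φ₁ : RHom W₁ W₁') (φ₂ : RHom W₂ W₂') : RHom (esmash W₁ W₂) (esmash W₁' W₂') where
  f := pushout.map _ _ _ _ (𝟙 (X₁ ⨯ X₂)) (prod.map φ₁.f φ₂.f) (wedgeMap φ₁ φ₂)
    (by
      apply pushout.hom_ext <;>
        simp [wedgeObj, pushout.inl_desc, pushout.inr_desc, pushout.inl_desc_assoc, pushout.inr_desc_assoc, wedgeMap, wedgeToBase, prod.map_map, φ₁.hr, φ₂.hr])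
    (by
      apply pushout.hom_ext <;>
        simp [wedgeObj, pushout.inl_desc, pushout.inr_desc, pushout.inl_desc_assoc, pushout.inr_desc_assoc, wedgeMap, wedgeToProd, prod.map_map, φ₁.hs, φ₂.hs])
  hs := by simp [esmash, pushout.map, pushout.inl_desc]
  hr := by
    apply pushout.hom_ext <;>
      simp [esmash, pushout.map, pushout.inl_desc_assoc, pushout.inr_desc_assoc, prod.map_map, φ₁.hr, φ₂.hr]
    · erw [pushout.inl_desc, pushout.inl_desc]
    · erw [pushout.inr_desc, pushout.inr_desc]; simp [prod.map_map, φ₁.hr, φ₂.hr]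

/-- The map induced on pushforwards by a morphism of retractive simplicial sets. -/
noncomputable def pushfMap {X X' : SSet.{u}} (f : X ⟶ X') {W W' : Retr X}
    (φ : RHom W W') : RHom (pushf f W) (pushf f W') where
  f := pushout.map _ _ _ _ φ.f (𝟙 X') (𝟙 X) (by simp [φ.hs]) (by simp)
  hs := by simp [pushf, pushout.map, pushout.inr_desc]
  hr := by
    apply pushout.hom_ext <;> simp [pushf, pushout.map, pushout.inl_desc, pushout.inr_desc, pushout.inl_desc_assoc, pushout.inr_desc_assoc, φ.hr]
    rw [← Category.assoc, φ.hr]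

/-- The map induced on internal smash products by a pair of morphisms. -/
noncomputable def ismashMap (μ : X ⨯ X ⟶ X) {W₁ W₁' W₂ W₂' : Retr X}
    (φ₁ : RHom W₁ W₁') (φ₂ : RHom W₂ W₂') :
    RHom (ismash μ W₁ W₂) (ismash μ W₁' W₂') :=
  pushfMap μ (esmashMap φ₁ φ₂)

/-- The pushout of retractive simplicial sets along a pair of morphisms,
computed on underlying simplicial sets. -/
noncomputable def retrPushout {W₁ W₂ W₀ : Retr X} (u : RHom W₁ W₂) (v : RHom W₁ W₀) :
    Retr X where
  Y := pushout u.f v.f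
  s := W₂.s ≫ pushout.inl _ _
  r := pushout.desc W₂.r W₀.r (by rw [u.hr, v.hr])
  retr := by rw [Category.assoc, pushout.inl_desc, W₂.retr]

/-- The first structure map into the pushout of retractive simplicial sets. -/
noncomputable def pInl {W₁ W₂ W₀ : Retr X} (u : RHom W₁ W₂) (v : RHom W₁ W₀) :
    RHom W₂ (retrPushout u v) where
  f := pushout.inl _ _
  hs := rfl
  hr := by simp [retrPushout, pushout.inl_desc]

/-- The second structure map into the pushout of retractive simplicial sets. -/
noncomputable def pInr {W₁ W₂ W₀ : Retr X} (u : RHom W₁ W₂) (v : RHom W₁ W₀) :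
    RHom W₀ (retrPushout u v) where
  f := pushout.inr _ _
  hs := by
    show W₀.s ≫ _ = W₂.s ≫ _
    rw [← u.hs, ← v.hs]
    erw [Category.assoc, Category.assoc, pushout.condition]; rfl
  hr := by simp [retrPushout, pushout.inr_desc]

/-- The sum of retractive simplicial sets over `X`. -/
noncomputable def retrSum (Y₁ Y₂ : Retr X) : Retr X where
  Y := pushout Y₁.s Y₂.s
  s := Y₁.s ≫ pushout.inl _ _
  r := pushout.desc Y₁.r Y₂.r (by rw [Y₁.retr, Y₂.retr])
  retr := by rw [Category.assoc, pushout.inl_desc, Y₁.retr]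

/-- The first sum inclusion. -/
noncomputable def sumInl (Y₁ Y₂ : Retr X) : RHom Y₁ (retrSum Y₁ Y₂) where
  f := pushout.inl _ _
  hs := rfl
  hr := by simp [retrSum, pushout.inl_desc]

/-- The second sum inclusion. -/
noncomputable def sumInr (Y₁ Y₂ : Retr X) : RHom Y₂ (retrSum Y₁ Y₂) where
  f := pushout.inr _ _
  hs := pushout.condition.symm
  hr := by simp [retrSum, pushout.inr_desc]

end Retr

open Retr

/-- For a colimit pushout cocone in `Type` with `f` injective, two elements of `X₁` are
identified in the pushout iff they are equal or both come from `S` with equal `g`-images. -/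
lemma pushoutCocone_inl_eq_inl_iff_of_isColimit {S X₁ X₂ : Type u} {f : S ⟶ X₁} {g : S ⟶ X₂}
    {c : PushoutCocone f g} (hc : IsColimit c) (h₁ : Function.Injective f) (x y : X₁) :
    c.inl x = c.inl y ↔ x = y ∨ ∃ s t, g s = g t ∧ x = f s ∧ y = f t := by
  have : Mono f := (mono_iff_injective f).2 h₁
  let φ := IsColimit.coconePointUniqueUpToIso hc (Types.Pushout.isColimitCocone f g)
  have hφ : ∀ z, φ.hom (c.inl z) = Types.Pushout.inl f g z := fun z =>
    ConcreteCategory.congr_hom (hc.comp_coconePointUniqueUpToIso_hom (Types.Pushout.isColimitCocone f g)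
      WalkingSpan.left) z
  have hinj : Function.Injective φ.hom := by
    intro a b h
    have := congr_arg φ.inv h
    simpa using this
  constructor
  · intro h
    have h2 : Types.Pushout.inl f g x = Types.Pushout.inl f g y := by
      rw [← hφ, ← hφ, h]
    have := (Types.Pushout.quot_mk_eq_iff f g (Sum.inl x) (Sum.inl y)).1 h2
    rw [Types.Pushout.inl_rel'_inl_iff] at this
    rcases this with h | ⟨s, t, hst, hx, hy⟩
    · exact Or.inl h
    · exact Or.inr ⟨s, t, hst, hx, hy⟩
  · rintro (rfl | ⟨s, t, hst, rfl, rfl⟩)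
    · rfl
    · apply hinj
      rw [hφ, hφ]
      exact (Types.Pushout.quot_mk_eq_iff f g _ _).2
        (Types.Pushout.Rel'.inl_inl s t hst)

/-- Pushouts of simplicial sets are computed levelwise: the evaluated pushout cocone is
a colimit pushout cocone of types. -/
noncomputable def evalPushoutIsColimit {A B C : SSet.{u}} (f : A ⟶ B) (g : A ⟶ C)
    (n : SimplexCategoryᵒᵖ) :
    IsColimit (PushoutCocone.mk
      (((evaluation SimplexCategoryᵒᵖ (Type u)).obj n).map (pushout.inl f g))
      (((evaluation SimplexCategoryᵒᵖ (Type u)).obj n).map (pushout.inr f g))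
      (by rw [← Functor.map_comp, ← Functor.map_comp, pushout.condition])) :=
  isColimitOfHasPushoutOfPreservesColimit
    ((evaluation SimplexCategoryᵒᵖ (Type u)).obj n) f g

/-- **Extension property for cofibrations of retractive simplicial sets.**  Suppose given
retractive simplicial sets `A`, `B`, `A'`, `B'` over `X`, cofibrations `i : A ⟶ B` and
`i' : A' ⟶ B'` over and under `X`, and maps `fA : A ⟶ A'`, `fB : B ⟶ B'` over and under
`X` with `fB` restricting to `fA`.  Let `C := B ⨿_A X` and `C' := B' ⨿_{A'} X` be the
pushouts along the retractions, with induced map `f_C : C ⟶ C'`.  If the underlying maps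
of `fA` and `f_C` are monomorphisms, then so is the underlying map of `fB`. -/
theorem extension_property {X : SSet} {A B A' B' : Retr X}
    (i : RHom A B) (i' : RHom A' B') (fA : RHom A A') (fB : RHom B B')
    (hi : Mono i.f) (hi' : Mono i'.f)
    (hcompat : i.f ≫ fB.f = fA.f ≫ i'.f)
    (hfA : Mono fA.f)
    (hfC : Mono (pushout.map i.f A.r i'.f A'.r fB.f (𝟙 X) fA.f hcompat
      (by rw [Category.comp_id, fA.hr]))) :
    Mono fB.f := by
  set fC := pushout.map i.f A.r i'.f A'.r fB.f (𝟙 X) fA.f hcompat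
    (by rw [Category.comp_id, fA.hr]) with hfCdef
  rw [NatTrans.mono_iff_mono_app]
  intro n
  rw [mono_iff_injective]
  intro b₁ b₂ hb
  -- injectivity of the relevant maps at level n
  have hiInj : Function.Injective (i.f.app n) := by
    rw [← mono_iff_injective]
    exact inferInstanceAs (Mono (((evaluation _ _).obj n).map i.f))
  have hi'Inj : Function.Injective (i'.f.app n) := by
    rw [← mono_iff_injective]
    exact inferInstanceAs (Mono (((evaluation _ _).obj n).map i'.f))
  have hfAInj : Function.Injective (fA.f.app n) := by
    rw [← mono_iff_injective]
    exact inferInstanceAs (Mono (((evaluation _ _).obj n).map fA.f))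
  have hfCInj : Function.Injective (fC.app n) := by
    rw [← mono_iff_injective]
    exact inferInstanceAs (Mono (((evaluation _ _).obj n).map fC))
  -- the evaluated pushout cocone is a colimit
  have hcolim := evalPushoutIsColimit i.f A.r n
  -- the images of b₁, b₂ in the pushout agree
  have hcomm : pushout.inl i.f A.r ≫ fC = fB.f ≫ pushout.inl i'.f A'.r := by
    rw [hfCdef]; exact pushout.inl_desc _ _ _
  have hkey : (pushout.inl i.f A.r).app n b₁ = (pushout.inl i.f A.r).app n b₂ := by
    apply hfCInj
    have h₁ : fC.app n ((pushout.inl i.f A.r).app n b₁) =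
        (pushout.inl i'.f A'.r).app n (fB.f.app n b₁) :=
      ConcreteCategory.congr_hom (congr_app hcomm n) b₁
    have h₂ : fC.app n ((pushout.inl i.f A.r).app n b₂) =
        (pushout.inl i'.f A'.r).app n (fB.f.app n b₂) :=
      ConcreteCategory.congr_hom (congr_app hcomm n) b₂
    rw [h₁, h₂, hb]
  rcases (pushoutCocone_inl_eq_inl_iff_of_isColimit hcolim hiInj b₁ b₂).1 hkey with
    h | ⟨a₁, a₂, _, rfl, rfl⟩
  · exact h
  · -- b₁ = i a₁, b₂ = i a₂ : use compatibility and injectivity of i' and fA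
    have h₁ : fB.f.app n (i.f.app n a₁) = i'.f.app n (fA.f.app n a₁) :=
      ConcreteCategory.congr_hom (congr_app hcompat n) a₁
    have h₂ : fB.f.app n (i.f.app n a₂) = i'.f.app n (fA.f.app n a₂) :=
      ConcreteCategory.congr_hom (congr_app hcompat n) a₂
    have : fA.f.app n a₁ = fA.f.app n a₂ := hi'Inj (h₁.symm.trans (hb.trans h₂))
    rw [hfAInj this]
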